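/- The Jeffreys-prior distribution of the log odds ratio: if Z₁, Z₂, Z₃, Z₄ are independent standard normal random variables, then the law of W = log(Z₁²Z₄²/(Z₂²Z₃²)) = 2log|Z₁/Z₂| + 2log|Z₄/Z₃| is the probability measure on ℝ with Lebesgue density w ↦ w/(π²(e^{w/2} − e^{-w/2})) for w ≠ 0 (extended by its limit 2/π² at w = 0). -/

import Mathlib

open Real MeasureTheory ProbabilityTheory
open Filter Set Topology
open scoped ENNReal

/-- The density of the log odds ratio under the Jeffreys prior:
`w ↦ w/(π²(e^{w/2} − e^{-w/2}))` for `w ≠ 0`, extended by its limit `2/π²` at `w = 0`. -/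
noncomputable def logOddsRatioDensity (w : ℝ) : ℝ :=
  if w = 0 then 2 / π ^ 2
  else w / (π ^ 2 * (Real.exp (w / 2) - Real.exp (-(w / 2))))

noncomputable def gDens (u : ℝ) : ℝ := (Real.sqrt (2 * π))⁻¹ * Real.exp (u / 2 - Real.exp u / 2)
noncomputable def hDens (t : ℝ) : ℝ := (π * (Real.exp (t / 2) + Real.exp (-(t / 2))))⁻¹
lemma gDens_nonneg (u : ℝ) : 0 ≤ gDens u := by unfold gDens; positivity
lemma hDens_nonneg (t : ℝ) : 0 ≤ hDens t := by unfold hDens; positivity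
lemma gDens_measurable : Measurable gDens := by unfold gDens; fun_prop
lemma hDens_measurable : Measurable hDens := by unfold hDens; fun_prop

lemma lintegral_image_eq_lintegral_abs_deriv_smul' {s : Set ℝ} {f f' : ℝ → ℝ}
    (hs : MeasurableSet s) (hf' : ∀ x ∈ s, HasDerivWithinAt f (f' x) s x)
    (hf : Set.InjOn f s) (g : ℝ → ℝ≥0∞) :
    ∫⁻ x in f '' s, g x = ∫⁻ x in s, ENNReal.ofReal |f' x| * g (f x) := by
  simpa only [ContinuousLinearMap.det_toSpanSingleton] using
    lintegral_image_eq_lintegral_abs_det_fderiv_mul volume hs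
      (fun x hx => (hf' x hx).hasFDerivWithinAt) hf g

lemma measurable_logsq : Measurable (fun x : ℝ => Real.log (x ^ 2)) :=
  Real.measurable_log.comp (measurable_id.pow_const 2)

lemma map_log_sq_gaussian :
    Measure.map (fun x : ℝ => Real.log (x ^ 2)) (gaussianReal 0 1)
      = volume.withDensity fun u => ENNReal.ofReal (gDens u) := by
  have hmeas := measurable_logsq
  ext s hs
  rw [Measure.map_apply hmeas hs, gaussianReal_of_var_ne_zero 0 one_ne_zero,
    withDensity_apply _ (hmeas hs), withDensity_apply _ hs]
  set T : Set ℝ := (fun x : ℝ => Real.log (x ^ 2)) ⁻¹' s with hT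
  have hTm : MeasurableSet T := hmeas hs
  have h0 : (volume : Measure ℝ) {(0:ℝ)} = 0 := Real.volume_singleton
  set U : Set ℝ := (T ∩ Iio 0) ∪ (T ∩ Ioi 0) with hU
  have hUsub : U ⊆ T := by
    intro x hx; exact hx.elim (fun h => h.1) (fun h => h.1)
  have hsplit : T =ᵐ[volume] U := by
    rw [ae_eq_set]
    constructor
    · refine measure_mono_null (fun x hx => ?_) h0
      rcases lt_trichotomy x 0 with h | h | h
      · exact absurd (Or.inl ⟨hx.1, h⟩) hx.2
      · exact h ▸ rfl
      · exact absurd (Or.inr ⟨hx.1, h⟩) hx.2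
    · refine measure_mono_null (fun x hx => ?_) (measure_empty)
      exact absurd (hUsub hx.1) hx.2
  rw [setLIntegral_congr hsplit]
  have hdisj : Disjoint (T ∩ Iio 0) (T ∩ Ioi 0) := by
    refine Set.disjoint_left.2 fun x hx hx' => ?_
    exact absurd (show x < 0 from hx.2) (not_lt.2 (le_of_lt (show (0:ℝ) < x from hx'.2)))
  rw [hU, lintegral_union (hTm.inter measurableSet_Ioi) hdisj]
  have hlogsq : ∀ x : ℝ, 0 < x → Real.log (x ^ 2) = 2 * Real.log x := by
    intro x hx; rw [sq, Real.log_mul hx.ne' hx.ne']; ring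
  have hlogsqexp : ∀ u : ℝ, Real.log ((Real.exp (u / 2)) ^ 2) = u := by
    intro u; rw [hlogsq _ (Real.exp_pos _), Real.log_exp]; ring
  have hpos : T ∩ Ioi 0 = (fun u : ℝ => Real.exp (u / 2)) '' s := by
    ext x
    constructor
    · rintro ⟨hxT, hx0⟩
      rw [mem_Ioi] at hx0
      refine ⟨Real.log (x ^ 2), hxT, ?_⟩
      show Real.exp (Real.log (x ^ 2) / 2) = x
      rw [hlogsq x hx0, show (2:ℝ) * Real.log x / 2 = Real.log x from by ring, Real.exp_log hx0]
    · rintro ⟨u, hu, rfl⟩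
      refine ⟨?_, Real.exp_pos _⟩
      show Real.log ((Real.exp (u / 2)) ^ 2) ∈ s
      rw [hlogsqexp u]; exact hu
  have hneg : T ∩ Iio 0 = (fun u : ℝ => -Real.exp (u / 2)) '' s := by
    ext x
    constructor
    · rintro ⟨hxT, hx0⟩
      rw [mem_Iio] at hx0
      refine ⟨Real.log (x ^ 2), hxT, ?_⟩
      show -Real.exp (Real.log (x ^ 2) / 2) = x
      have hx0' : 0 < -x := by linarith
      rw [show x ^ 2 = (-x) ^ 2 from by ring, hlogsq _ hx0',
        show (2:ℝ) * Real.log (-x) / 2 = Real.log (-x) from by ring, Real.exp_log hx0']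
      ring
    · rintro ⟨u, hu, rfl⟩
      refine ⟨?_, by simp [mem_Iio, Real.exp_pos]⟩
      show Real.log ((-Real.exp (u / 2)) ^ 2) ∈ s
      rw [neg_pow, show (-1:ℝ)^2 * (Real.exp (u/2))^2 = (Real.exp (u/2))^2 from by ring,
        hlogsqexp u]
      exact hu
  have hderiv : ∀ u : ℝ, HasDerivAt (fun u : ℝ => Real.exp (u / 2)) (Real.exp (u / 2) / 2) u := by
    intro u
    simpa [div_eq_mul_inv, mul_comm, Function.comp_def] using
      (Real.hasDerivAt_exp (u / 2)).comp u ((hasDerivAt_id u).div_const 2)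
  have hinj : Function.Injective (fun u : ℝ => Real.exp (u / 2)) := by
    intro a b hab
    have := Real.exp_injective hab
    linarith
  have hposint := lintegral_image_eq_lintegral_abs_deriv_smul' hs
    (fun x _ => (hderiv x).hasDerivWithinAt) (hinj.injOn) (gaussianPDF 0 1)
  have hneginj : Function.Injective (fun u : ℝ => -Real.exp (u / 2)) :=
    fun a b hab => hinj (by simpa using neg_injective hab)
  have hnegint := lintegral_image_eq_lintegral_abs_deriv_smul' (f := fun u : ℝ => -Real.exp (u / 2)) hs
    (fun x _ => (((hderiv x).neg).hasDerivWithinAt)) (hneginj.injOn) (gaussianPDF 0 1)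
  rw [hpos, hneg, hposint, hnegint, ← lintegral_add_left]
  · refine setLIntegral_congr_fun hs (fun x _ => ?_)
    have hexpsq : (Real.exp (x / 2)) ^ 2 = Real.exp x := by
      rw [sq, ← Real.exp_add]; norm_num
    have hpdf : ∀ y : ℝ, gaussianPDF 0 1 y
        = ENNReal.ofReal ((Real.sqrt (2 * π))⁻¹ * Real.exp (-(y ^ 2) / 2)) := by
      intro y
      simp [gaussianPDF, gaussianPDFReal]
    rw [hpdf, hpdf]
    have habs : |(-(Real.exp (x / 2) / 2))| = Real.exp (x / 2) / 2 := by
      rw [abs_neg, abs_of_pos (by positivity)]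
    have habs2 : |Real.exp (x / 2) / 2| = Real.exp (x / 2) / 2 := abs_of_pos (by positivity)
    rw [neg_sq, habs, habs2]
    rw [← ENNReal.ofReal_mul (by positivity),
      ← ENNReal.ofReal_add (by positivity) (by positivity)]
    congr 1
    rw [hexpsq]
    unfold gDens
    rw [Real.exp_sub, neg_div, Real.exp_neg]
    field_simp
    ring
  · exact (ENNReal.measurable_ofReal.comp
      (((Real.measurable_exp.comp (measurable_id.div_const 2)).div_const 2).neg.abs)).mul
      ((measurable_gaussianPDF 0 1).comp (Real.measurable_exp.comp (measurable_id.div_const 2)).neg)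

lemma map_add_prod_withDensity (f g : ℝ → ℝ) (hf : Measurable f) (hg : Measurable g) :
    Measure.map (fun p : ℝ × ℝ => p.1 + p.2)
      ((volume.withDensity fun x => ENNReal.ofReal (f x)).prod
        (volume.withDensity fun x => ENNReal.ofReal (g x)))
      = volume.withDensity fun w => ∫⁻ t, ENNReal.ofReal (f t) * ENNReal.ofReal (g (w - t)) := by
  have hf' : Measurable fun x => ENNReal.ofReal (f x) := ENNReal.measurable_ofReal.comp hf
  have hg' : Measurable fun x => ENNReal.ofReal (g x) := ENNReal.measurable_ofReal.comp hg
  ext s hs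
  rw [Measure.map_apply measurable_add hs, Measure.prod_apply (measurable_add hs),
    withDensity_apply _ hs]
  have key : ∀ x : ℝ, (volume.withDensity fun y => ENNReal.ofReal (g y))
      (Prod.mk x ⁻¹' ((fun p : ℝ × ℝ => p.1 + p.2) ⁻¹' s))
      = ∫⁻ w, s.indicator (fun w => ENNReal.ofReal (g (w - x))) w := by
    intro x
    have hpre : (Prod.mk x ⁻¹' ((fun p : ℝ × ℝ => p.1 + p.2) ⁻¹' s))
        = (fun y => x + y) ⁻¹' s := rfl
    have hsm : MeasurableSet ((fun y : ℝ => x + y) ⁻¹' s) := (measurable_const_add x) hs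
    rw [hpre, withDensity_apply _ hsm, ← lintegral_indicator hsm]
    have hind : ∀ y : ℝ, ((fun y : ℝ => x + y) ⁻¹' s).indicator
        (fun y => ENNReal.ofReal (g y)) y
        = s.indicator (fun w => ENNReal.ofReal (g (w - x))) (x + y) := by
      intro y
      by_cases h : x + y ∈ s
      · rw [Set.indicator_of_mem (by exact h), Set.indicator_of_mem h, add_sub_cancel_left]
      · rw [Set.indicator_of_notMem (by exact h), Set.indicator_of_notMem h]
    simp_rw [hind]
    exact lintegral_add_left_eq_self (s.indicator fun w => ENNReal.ofReal (g (w - x))) x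
  simp_rw [key]
  have hjoint : Measurable (fun q : ℝ × ℝ =>
      s.indicator (fun w => ENNReal.ofReal (g (w - q.1))) q.2) := by
    have heq : (fun q : ℝ × ℝ => s.indicator (fun w => ENNReal.ofReal (g (w - q.1))) q.2)
        = ((Set.univ : Set ℝ) ×ˢ s).indicator
            (fun q : ℝ × ℝ => ENNReal.ofReal (g (q.2 - q.1))) := by
      funext q
      by_cases h : q.2 ∈ s
      · rw [Set.indicator_of_mem h, Set.indicator_of_mem (by simp [h])]
      · rw [Set.indicator_of_notMem h, Set.indicator_of_notMem (by simp [h])]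
    rw [heq]
    exact (hg'.comp (measurable_snd.sub measurable_fst)).indicator
      (MeasurableSet.univ.prod hs)
  have hinner : Measurable fun x : ℝ =>
      ∫⁻ w, s.indicator (fun w => ENNReal.ofReal (g (w - x))) w :=
    hjoint.lintegral_prod_right'
  rw [lintegral_withDensity_eq_lintegral_mul _ hf' hinner]
  have hpull : ∀ x : ℝ, ((fun x => ENNReal.ofReal (f x)) * fun x =>
      ∫⁻ w, s.indicator (fun w => ENNReal.ofReal (g (w - x))) w) x
      = ∫⁻ w, ENNReal.ofReal (f x) * s.indicator (fun w => ENNReal.ofReal (g (w - x))) w := by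
    intro x
    exact (lintegral_const_mul _ (hjoint.comp (measurable_prodMk_left : Measurable (Prod.mk x)))).symm
  simp_rw [hpull]
  rw [lintegral_lintegral_swap (((hf'.comp measurable_fst).mul hjoint).aemeasurable)]
  have hfinal : ∀ w : ℝ, (∫⁻ x, ENNReal.ofReal (f x)
      * s.indicator (fun w => ENNReal.ofReal (g (w - x))) w)
      = s.indicator (fun w => ∫⁻ x, ENNReal.ofReal (f x) * ENNReal.ofReal (g (w - x))) w := by
    intro w
    by_cases h : w ∈ s
    · rw [Set.indicator_of_mem h]
      congr 1 with x
      rw [Set.indicator_of_mem h]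
    · rw [Set.indicator_of_notMem h]
      simp_rw [Set.indicator_of_notMem h, mul_zero]
      exact lintegral_zero
  simp_rw [hfinal]
  rw [lintegral_indicator hs]

lemma map_neg_withDensity (f : ℝ → ℝ) (hf : Measurable f) :
    Measure.map (fun x : ℝ => -x) (volume.withDensity fun x => ENNReal.ofReal (f x))
      = volume.withDensity fun x => ENNReal.ofReal (f (-x)) := by
  ext s hs
  rw [Measure.map_apply measurable_neg hs, withDensity_apply _ (measurable_neg hs),
    withDensity_apply _ hs]
  have := (Measure.measurePreserving_neg (volume : Measure ℝ)).setLIntegral_comp_preimage_emb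
    measurableEmbedding_neg (fun y => ENNReal.ofReal (f (-y))) s
  simp only [neg_neg] at this
  exact this

lemma map_add_of_indepFun {Ω : Type*} [MeasureSpace Ω] [IsProbabilityMeasure (ℙ : Measure Ω)]
    (X Y : Ω → ℝ) (hX : Measurable X) (hY : Measurable Y) (h : IndepFun X Y ℙ) :
    Measure.map (fun ω => X ω + Y ω) ℙ
      = Measure.map (fun p : ℝ × ℝ => p.1 + p.2)
          ((Measure.map X ℙ).prod (Measure.map Y ℙ)) := by
  rw [← (indepFun_iff_map_prod_eq_prod_map_map hX.aemeasurable hY.aemeasurable).mp h,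
    Measure.map_map measurable_add (hX.prodMk hY)]
  rfl

lemma exp_integral (b : ℝ) (hb : 0 < b) :
    Integrable (fun t : ℝ => Real.exp t * Real.exp (-(b * Real.exp t)))
    ∧ (∫ t : ℝ, Real.exp t * Real.exp (-(b * Real.exp t))) = b⁻¹ := by
  set f : ℝ → ℝ := fun t => Real.exp t * Real.exp (-(b * Real.exp t)) with hfdef
  set F : ℝ → ℝ := fun t => -b⁻¹ * Real.exp (-(b * Real.exp t)) with hFdef
  have hF : ∀ t : ℝ, HasDerivAt F (f t) t := by
    intro t
    have h1 : HasDerivAt (fun t : ℝ => -(b * Real.exp t)) (-(b * Real.exp t)) t :=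
      ((Real.hasDerivAt_exp t).const_mul b).neg
    have h2 := (h1.exp).const_mul (-b⁻¹)
    refine h2.congr_deriv ?_
    show _ = Real.exp t * Real.exp (-(b * Real.exp t))
    field_simp
  have htop : Tendsto F atTop (𝓝 0) := by
    have h1 : Tendsto (fun t : ℝ => -(b * Real.exp t)) atTop atBot := by
      have := Real.tendsto_exp_atTop.const_mul_atTop_of_neg (show -b < 0 by linarith)
      simpa [neg_mul] using this
    have h2 := (Real.tendsto_exp_atBot.comp h1).const_mul (-b⁻¹)
    simpa [hFdef, neg_mul] using h2
  have hbot : Tendsto F atBot (𝓝 (-b⁻¹)) := by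
    have h1 : Tendsto (fun t : ℝ => -(b * Real.exp t)) atBot (𝓝 0) := by
      have := Real.tendsto_exp_atBot.const_mul (-b)
      simpa [neg_mul] using this
    have h2 := ((Real.continuous_exp.tendsto 0).comp h1).const_mul (-b⁻¹)
    simpa [hFdef, neg_mul] using h2
  have hnonneg : ∀ t : ℝ, 0 ≤ f t := fun t => by positivity
  have hmeas : Measurable f := by fun_prop
  have hint : Integrable f := by
    rw [← integrableOn_univ, ← Set.Iic_union_Ioi (a := (0:ℝ)), integrableOn_union]
    constructor
    · refine Integrable.mono' (integrableOn_exp_Iic 0) hmeas.aestronglyMeasurable.restrict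
        (Filter.Eventually.of_forall fun t => ?_)
      rw [Real.norm_eq_abs, abs_of_nonneg (hnonneg t)]
      have : Real.exp (-(b * Real.exp t)) ≤ 1 :=
        Real.exp_le_one_iff.mpr (by positivity |> neg_nonpos_of_nonneg)
      calc f t ≤ Real.exp t * 1 := by
            exact mul_le_mul_of_nonneg_left this (Real.exp_pos t).le
        _ = Real.exp t := mul_one _
    · exact integrableOn_Ioi_deriv_of_nonneg' (fun x _ => hF x)
        (fun x _ => hnonneg x) htop
  refine ⟨hint, ?_⟩
  have := integral_of_hasDerivAt_of_tendsto hF hint hbot htop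
  simpa using this

lemma evalA (x : ℝ) :
    (∫⁻ t, ENNReal.ofReal (gDens t) * ENNReal.ofReal (gDens (-(x - t))))
      = ENNReal.ofReal (hDens x) := by
  set c : ℝ := (Real.sqrt (2 * π))⁻¹ with hc
  set b : ℝ := (1 + Real.exp (-x)) / 2 with hbdef
  have hb : 0 < b := by positivity
  have hprod : ∀ t : ℝ, gDens t * gDens (-(x - t))
      = (c ^ 2 * Real.exp (-(x / 2))) * (Real.exp t * Real.exp (-(b * Real.exp t))) := by
    intro t
    unfold gDens
    rw [show -(x - t) = t - x from by ring]
    have hexp : Real.exp (t - x) = Real.exp t * Real.exp (-x) := by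
      rw [Real.exp_sub, Real.exp_neg]; field_simp
    calc c * Real.exp (t / 2 - Real.exp t / 2) * (c * Real.exp ((t - x) / 2 - Real.exp (t - x) / 2))
        = c ^ 2 * Real.exp ((t / 2 - Real.exp t / 2) + ((t - x) / 2 - Real.exp (t - x) / 2)) := by
          rw [Real.exp_add]; ring
      _ = c ^ 2 * Real.exp ((-(x / 2)) + (t + (-(b * Real.exp t)))) := by
          rw [hexp, hbdef]; ring_nf
      _ = (c ^ 2 * Real.exp (-(x / 2))) * (Real.exp t * Real.exp (-(b * Real.exp t))) := by
          rw [Real.exp_add, Real.exp_add]; ring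
  obtain ⟨hint, hval⟩ := exp_integral b hb
  have hint' : Integrable (fun t : ℝ => gDens t * gDens (-(x - t))) := by
    have := (hint.const_mul (c ^ 2 * Real.exp (-(x / 2))))
    exact this.congr (Filter.Eventually.of_forall fun t => (hprod t).symm)
  have h1 : (∫⁻ t, ENNReal.ofReal (gDens t) * ENNReal.ofReal (gDens (-(x - t))))
      = ∫⁻ t, ENNReal.ofReal (gDens t * gDens (-(x - t))) := by
    congr 1 with t
    rw [ENNReal.ofReal_mul (gDens_nonneg t)]
  rw [h1, ← ofReal_integral_eq_lintegral_ofReal hint'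
    (Filter.Eventually.of_forall fun t => mul_nonneg (gDens_nonneg t) (gDens_nonneg _))]
  congr 1
  have h2 : (∫ t, gDens t * gDens (-(x - t)))
      = (c ^ 2 * Real.exp (-(x / 2))) * ∫ t, Real.exp t * Real.exp (-(b * Real.exp t)) := by
    rw [← integral_const_mul]
    exact integral_congr_ae (Filter.Eventually.of_forall fun t => hprod t)
  rw [h2, hval]
  -- c² = (2π)⁻¹ ; now algebra
  have hcsq : c ^ 2 = (2 * π)⁻¹ := by
    rw [hc, inv_pow, Real.sq_sqrt (by positivity : (0:ℝ) ≤ 2 * π)]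
  have hE : Real.exp (-(x / 2)) = (Real.exp (x / 2))⁻¹ := Real.exp_neg _
  have hEx : Real.exp (-x) = ((Real.exp (x / 2)) ^ 2)⁻¹ := by
    rw [Real.exp_neg]
    congr 1
    rw [sq, ← Real.exp_add]
    norm_num
  unfold hDens
  rw [hcsq, hbdef, hE, hEx]
  have hEpos : (0:ℝ) < Real.exp (x / 2) := Real.exp_pos _
  have hπ : π ≠ 0 := Real.pi_ne_zero
  field_simp

lemma evalB (w : ℝ) (hw : w ≠ 0) :
    (∫⁻ t, ENNReal.ofReal (hDens t) * ENNReal.ofReal (hDens (w - t)))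
      = ENNReal.ofReal (w / (π ^ 2 * (Real.exp (w / 2) - Real.exp (-(w / 2))))) := by
  set a : ℝ := Real.exp (w / 2) with hadef
  have ha : 0 < a := Real.exp_pos _
  have ha1 : a ≠ 1 := by
    rw [hadef, Ne, Real.exp_eq_one_iff]
    exact fun h => hw (by linarith)
  have ha2 : a ^ 2 - 1 ≠ 0 := by
    intro h
    have : a ^ 2 = 1 := by linarith
    have := abs_eq_abs.mpr (Or.inl (show a = 1 by nlinarith))
    exact ha1 (by nlinarith)
  set q : ℝ → ℝ := fun t => a * Real.exp t / ((Real.exp t + 1) * (Real.exp t + a ^ 2))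
    with hqdef
  have hqnonneg : ∀ t, 0 ≤ q t := fun t => by
    have := Real.exp_pos t; positivity
  have hprod : ∀ t : ℝ, hDens t * hDens (w - t) = (π ^ 2)⁻¹ * q t := by
    intro t
    have hE : 0 < Real.exp (t / 2) := Real.exp_pos _
    have h1 : Real.exp ((w - t) / 2) = a * (Real.exp (t / 2))⁻¹ := by
      rw [show (w - t) / 2 = w / 2 - t / 2 from by ring, Real.exp_sub, div_eq_mul_inv]
    have h2 : Real.exp (-((w - t) / 2)) = a⁻¹ * Real.exp (t / 2) := by
      rw [show -((w - t) / 2) = t / 2 - w / 2 from by ring, Real.exp_sub, div_eq_mul_inv]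
      ring
    have h3 : Real.exp (-(t / 2)) = (Real.exp (t / 2))⁻¹ := Real.exp_neg _
    have h4 : Real.exp t = (Real.exp (t / 2)) ^ 2 := by
      rw [sq, ← Real.exp_add]; norm_num
    unfold hDens
    rw [h1, h2, h3]
    simp only [hqdef]
    rw [h4]
    have hπ : π ≠ 0 := Real.pi_ne_zero
    field_simp
    ring
  set C : ℝ := a / (a ^ 2 - 1) with hCdef
  set F : ℝ → ℝ := fun t => C * (Real.log (Real.exp t + 1) - Real.log (Real.exp t + a ^ 2))
    with hFdef
  have hFderiv : ∀ t : ℝ, HasDerivAt F (q t) t := by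
    intro t
    have he : 0 < Real.exp t := Real.exp_pos t
    have h1 : HasDerivAt (fun t : ℝ => Real.log (Real.exp t + 1))
        (Real.exp t / (Real.exp t + 1)) t :=
      HasDerivAt.log ((Real.hasDerivAt_exp t).add_const 1) (by positivity)
    have h2 : HasDerivAt (fun t : ℝ => Real.log (Real.exp t + a ^ 2))
        (Real.exp t / (Real.exp t + a ^ 2)) t :=
      HasDerivAt.log ((Real.hasDerivAt_exp t).add_const (a ^ 2)) (by positivity)
    have h3 := ((h1.sub h2).const_mul C)
    refine h3.congr_deriv ?_
    rw [hqdef, hCdef]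
    field_simp
    ring
  have hexpneg : Tendsto (fun t : ℝ => Real.exp (-t)) atTop (𝓝 0) :=
    Real.tendsto_exp_atBot.comp tendsto_neg_atTop_atBot
  have hform : ∀ t : ℝ, F t
      = C * (Real.log (1 + Real.exp (-t)) - Real.log (1 + a ^ 2 * Real.exp (-t))) := by
    intro t
    have he : 0 < Real.exp t := Real.exp_pos t
    have hee : Real.exp t * Real.exp (-t) = 1 := by rw [← Real.exp_add]; simp
    have e1 : Real.exp t + 1 = Real.exp t * (1 + Real.exp (-t)) := by
      rw [mul_add, mul_one, hee]
    have e2 : Real.exp t + a ^ 2 = Real.exp t * (1 + a ^ 2 * Real.exp (-t)) := by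
      rw [mul_add, mul_one, show Real.exp t * (a ^ 2 * Real.exp (-t)) = a ^ 2 * (Real.exp t * Real.exp (-t)) from by ring, hee, mul_one]
    rw [hFdef]
    simp only
    rw [e1, e2, Real.log_mul he.ne' (by positivity), Real.log_mul he.ne' (by positivity)]
    ring
  have htop : Tendsto F atTop (𝓝 0) := by
    have hcont : ContinuousAt (fun s : ℝ =>
        C * (Real.log (1 + s) - Real.log (1 + a ^ 2 * s))) 0 := by
      apply ContinuousAt.mul continuousAt_const
      apply ContinuousAt.sub
      · exact (Real.continuousAt_log (by norm_num)).comp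
          (by fun_prop : ContinuousAt (fun s : ℝ => 1 + s) 0)
      · exact (Real.continuousAt_log (by norm_num)).comp
          (by fun_prop : ContinuousAt (fun s : ℝ => 1 + a ^ 2 * s) 0)
    have h := hcont.tendsto.comp hexpneg
    simp only [Function.comp_def] at h
    have h' := Filter.Tendsto.congr (fun t => (hform t).symm) h
    convert h' using 2
    norm_num
  have hbot : Tendsto F atBot (𝓝 (-(C * w))) := by
    have hcont : ContinuousAt (fun s : ℝ =>
        C * (Real.log (s + 1) - Real.log (s + a ^ 2))) 0 := by
      apply ContinuousAt.mul continuousAt_const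
      apply ContinuousAt.sub
      · exact (Real.continuousAt_log (by norm_num)).comp
          (by fun_prop : ContinuousAt (fun s : ℝ => s + 1) 0)
      · exact (Real.continuousAt_log (by positivity)).comp
          (by fun_prop : ContinuousAt (fun s : ℝ => s + a ^ 2) 0)
    have hcomp := hcont.tendsto.comp Real.tendsto_exp_atBot
    simp only [Function.comp_def] at hcomp
    have h' : Tendsto F atBot (𝓝 (C * (Real.log ((0:ℝ) + 1) - Real.log (0 + a ^ 2)))) := by
      refine Filter.Tendsto.congr (fun t => ?_) hcomp
      rw [hFdef]
    convert h' using 2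
    simp only [zero_add, Real.log_one]
    rw [show Real.log (a ^ 2) = 2 * Real.log a from by
      rw [sq, Real.log_mul ha.ne' ha.ne']; ring]
    rw [hadef, Real.log_exp]
    ring
  have hqint : Integrable q := by
    rw [← integrableOn_univ, ← Set.Iic_union_Ioi (a := (0:ℝ)), integrableOn_union]
    constructor
    · refine Integrable.mono' ((integrableOn_exp_Iic 0).mul_const a⁻¹)
        (by fun_prop : Measurable q).aestronglyMeasurable.restrict
        (Filter.Eventually.of_forall fun t => ?_)
      rw [Real.norm_eq_abs, abs_of_nonneg (hqnonneg t)]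
      rw [hqdef]
      have he : 0 < Real.exp t := Real.exp_pos t
      have hden : a ^ 2 ≤ (Real.exp t + 1) * (Real.exp t + a ^ 2) := by nlinarith
      rw [div_le_iff₀ (by nlinarith)]
      calc a * Real.exp t = Real.exp t * a⁻¹ * a ^ 2 := by field_simp
        _ ≤ Real.exp t * a⁻¹ * ((Real.exp t + 1) * (Real.exp t + a ^ 2)) := by
            apply mul_le_mul_of_nonneg_left hden (by positivity)
    · exact integrableOn_Ioi_deriv_of_nonneg' (fun x _ => hFderiv x) (fun x _ => hqnonneg x) htop
  have hval : (∫ t, q t) = C * w := by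
    have := integral_of_hasDerivAt_of_tendsto hFderiv hqint hbot htop
    simpa using this
  have h1 : (∫⁻ t, ENNReal.ofReal (hDens t) * ENNReal.ofReal (hDens (w - t)))
      = ∫⁻ t, ENNReal.ofReal (hDens t * hDens (w - t)) := by
    congr 1 with t
    rw [ENNReal.ofReal_mul (hDens_nonneg t)]
  have hint' : Integrable (fun t => hDens t * hDens (w - t)) := by
    have := hqint.const_mul ((π ^ 2)⁻¹)
    exact this.congr (Filter.Eventually.of_forall fun t => (hprod t).symm)
  rw [h1, ← ofReal_integral_eq_lintegral_ofReal hint'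
    (Filter.Eventually.of_forall fun t => mul_nonneg (hDens_nonneg t) (hDens_nonneg _))]
  congr 1
  have h2 : (∫ t, hDens t * hDens (w - t)) = (π ^ 2)⁻¹ * ∫ t, q t := by
    rw [← integral_const_mul]
    exact integral_congr_ae (Filter.Eventually.of_forall fun t => hprod t)
  rw [h2, hval, hCdef]
  have hainv : Real.exp (-(w / 2)) = a⁻¹ := Real.exp_neg _
  rw [hainv]
  have hπ : π ≠ 0 := Real.pi_ne_zero
  have hsub : a - a⁻¹ = (a ^ 2 - 1) / a := by
    field_simp
  have hne : π ^ 2 * (a - a⁻¹) ≠ 0 := by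
    rw [hsub]
    exact mul_ne_zero (pow_ne_zero 2 hπ) (div_ne_zero ha2 ha.ne')
  rw [eq_div_iff hne]
  field_simp

lemma law_diff {Ω : Type*} [MeasureSpace Ω] [IsProbabilityMeasure (ℙ : Measure Ω)]
    (A B : Ω → ℝ) (hA : Measurable A) (hB : Measurable B) (hAB : IndepFun A B ℙ)
    (hlA : Measure.map A ℙ = gaussianReal 0 1) (hlB : Measure.map B ℙ = gaussianReal 0 1) :
    Measure.map (fun ω => Real.log ((A ω) ^ 2) - Real.log ((B ω) ^ 2)) ℙ
      = volume.withDensity fun x => ENNReal.ofReal (hDens x) := by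
  set X : Ω → ℝ := fun ω => Real.log ((A ω) ^ 2) with hXdef
  set Y : Ω → ℝ := fun ω => -Real.log ((B ω) ^ 2) with hYdef
  have hXm : Measurable X := measurable_logsq.comp hA
  have hYm : Measurable Y := (measurable_logsq.comp hB).neg
  have hXY : IndepFun X Y ℙ := hAB.comp measurable_logsq measurable_logsq.neg
  have hfun : (fun ω => Real.log ((A ω) ^ 2) - Real.log ((B ω) ^ 2)) = fun ω => X ω + Y ω := by
    funext ω; rw [hXdef, hYdef]; ring
  rw [hfun, map_add_of_indepFun X Y hXm hYm hXY]
  have hmapX : Measure.map X ℙ = volume.withDensity fun u => ENNReal.ofReal (gDens u) := by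
    rw [show X = (fun x : ℝ => Real.log (x ^ 2)) ∘ A from rfl,
      ← Measure.map_map measurable_logsq hA, hlA, map_log_sq_gaussian]
  have hmapY : Measure.map Y ℙ = volume.withDensity fun u => ENNReal.ofReal (gDens (-u)) := by
    rw [show Y = (fun x : ℝ => -x) ∘ ((fun x : ℝ => Real.log (x ^ 2)) ∘ B) from rfl,
      ← Measure.map_map measurable_neg (measurable_logsq.comp hB),
      ← Measure.map_map measurable_logsq hB, hlB, map_log_sq_gaussian,
      map_neg_withDensity _ gDens_measurable]
  rw [hmapX, hmapY, map_add_prod_withDensity gDens (fun u => gDens (-u)) gDens_measurable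
    (gDens_measurable.comp measurable_neg)]
  congr 1
  funext x
  exact evalA x

/-- If `Z 0, …, Z 3` are i.i.d. standard normal, then
`W = log(Z₀² Z₃² / (Z₁² Z₂²))` has density `logOddsRatioDensity`. -/
theorem jeffreys_log_odds_ratio_law
    {Ω : Type*} [MeasureSpace Ω] [IsProbabilityMeasure (ℙ : Measure Ω)]
    (Z : Fin 4 → Ω → ℝ) (hZ : ∀ i, Measurable (Z i))
    (hindep : iIndepFun Z ℙ)
    (hlaw : ∀ i, Measure.map (Z i) ℙ = gaussianReal 0 1) :
    Measure.map
        (fun ω => Real.log ((Z 0 ω) ^ 2 * (Z 3 ω) ^ 2 / ((Z 1 ω) ^ 2 * (Z 2 ω) ^ 2))) ℙ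
      = volume.withDensity fun w : ℝ => ENNReal.ofReal (logOddsRatioDensity w) := by
  set X : Ω → ℝ := fun ω => Real.log ((Z 0 ω) ^ 2) - Real.log ((Z 1 ω) ^ 2) with hXdef
  set Y : Ω → ℝ := fun ω => Real.log ((Z 3 ω) ^ 2) - Real.log ((Z 2 ω) ^ 2) with hYdef
  have hXm : Measurable X := (measurable_logsq.comp (hZ 0)).sub (measurable_logsq.comp (hZ 1))
  have hYm : Measurable Y := (measurable_logsq.comp (hZ 3)).sub (measurable_logsq.comp (hZ 2))
  have h01 : IndepFun (Z 0) (Z 1) ℙ := hindep.indepFun (by decide)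
  have h32 : IndepFun (Z 3) (Z 2) ℙ := hindep.indepFun (by decide)
  have hlawX := law_diff (Z 0) (Z 1) (hZ 0) (hZ 1) h01 (hlaw 0) (hlaw 1)
  have hlawY := law_diff (Z 3) (Z 2) (hZ 3) (hZ 2) h32 (hlaw 3) (hlaw 2)
  have hXY : IndepFun X Y ℙ := by
    have hpair := hindep.indepFun_prodMk_prodMk hZ 0 1 3 2
      (by decide) (by decide) (by decide) (by decide)
    have hφ : Measurable (fun p : ℝ × ℝ => Real.log (p.1 ^ 2) - Real.log (p.2 ^ 2)) :=
      (measurable_logsq.comp measurable_fst).sub (measurable_logsq.comp measurable_snd)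
    exact hpair.comp hφ hφ
  have hzero : ∀ i, ∀ᵐ ω ∂(ℙ : Measure Ω), Z i ω ≠ 0 := by
    intro i
    rw [ae_iff]
    have hset : {ω | ¬ Z i ω ≠ 0} = Z i ⁻¹' {0} := by
      ext ω; simp
    rw [hset, ← Measure.map_apply (hZ i) (measurableSet_singleton 0), hlaw i,
      gaussianReal_of_var_ne_zero _ one_ne_zero,
      withDensity_apply _ (measurableSet_singleton 0),
      Measure.restrict_eq_zero.mpr Real.volume_singleton, lintegral_zero_measure]
  have hae : (fun ω => Real.log ((Z 0 ω) ^ 2 * (Z 3 ω) ^ 2 / ((Z 1 ω) ^ 2 * (Z 2 ω) ^ 2)))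
      =ᵐ[(ℙ : Measure Ω)] fun ω => X ω + Y ω := by
    filter_upwards [hzero 0, hzero 1, hzero 2, hzero 3] with ω h0 h1 h2 h3
    have p0 : (Z 0 ω) ^ 2 ≠ 0 := pow_ne_zero 2 h0
    have p1 : (Z 1 ω) ^ 2 ≠ 0 := pow_ne_zero 2 h1
    have p2 : (Z 2 ω) ^ 2 ≠ 0 := pow_ne_zero 2 h2
    have p3 : (Z 3 ω) ^ 2 ≠ 0 := pow_ne_zero 2 h3
    rw [Real.log_div (mul_ne_zero p0 p3) (mul_ne_zero p1 p2),
      Real.log_mul p0 p3, Real.log_mul p1 p2, hXdef, hYdef]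
    ring
  rw [Measure.map_congr hae, map_add_of_indepFun X Y hXm hYm hXY, hlawX, hlawY,
    map_add_prod_withDensity hDens hDens hDens_measurable hDens_measurable]
  refine withDensity_congr_ae ?_
  have h0 : ∀ᵐ w : ℝ ∂(volume : Measure ℝ), w ≠ 0 := by
    rw [ae_iff]
    have : {w : ℝ | ¬ w ≠ 0} = {0} := by ext w; simp
    rw [this]
    exact Real.volume_singleton
  filter_upwards [h0] with w hw
  rw [evalB w hw]
  unfold logOddsRatioDensity
  rw [if_neg hw]
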